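/- Let q be an odd prime power, r ≥ 2 an even integer, and N a positive integer dividing q^r - 1 with gcd((q^r-1)/(q-1), N) = 2. Then gcd(q-1, (q^r-1)/N) = 2(q-1)/N. -/
import Mathlib


/-- Lemma 4.3 (part), eq. (4.4): under the paper's hypotheses,
`gcd(q-1, (q^r-1)/N) = 2(q-1)/N`. -/
theorem gcd_eq_two_mul_div (q r N : ℕ) (hq : IsPrimePow q) (hodd : Odd q)
    (hr : 2 ≤ r) (hre : Even r) (hN : 0 < N) (hNdvd : N ∣ q ^ r - 1)
    (hgcd : Nat.gcd ((q ^ r - 1) / (q - 1)) N = 2) :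
    Nat.gcd (q - 1) ((q ^ r - 1) / N) = 2 * (q - 1) / N := by
  have hq2 : 2 ≤ q := hq.two_le
  set D := (q ^ r - 1) / (q - 1) with hDdef
  have hdvd : q - 1 ∣ q ^ r - 1 := by
    simpa using Nat.sub_dvd_pow_sub_pow q 1 r
  have hQ : (q - 1) * D = q ^ r - 1 := Nat.mul_div_cancel' hdvd
  have h2D : 2 ∣ D := hgcd ▸ Nat.gcd_dvd_left D N
  have h2N : 2 ∣ N := hgcd ▸ Nat.gcd_dvd_right D N
  obtain ⟨M, hM⟩ := h2N
  obtain ⟨E, hE⟩ := h2D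
  have hMpos : 0 < M := by omega
  have hq1 : 0 < q - 1 := by omega
  -- N ∣ (q-1) * 2
  have hNd2 : N ∣ (q - 1) * 2 := by
    have h1 : N ∣ (q - 1) * N := Dvd.intro_left _ rfl
    have h2 : N ∣ (q - 1) * D := hQ ▸ hNdvd
    have h3 := Nat.dvd_gcd h1 h2
    rwa [Nat.gcd_mul_left, Nat.gcd_comm N D, hgcd] at h3
  have hMq : M ∣ q - 1 := by
    obtain ⟨k, hk⟩ := hNd2
    refine ⟨k, ?_⟩
    have : 2 * (q - 1) = 2 * (M * k) := by rw [hM] at hk; linarith [hk]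
    omega
  -- gcd(M, E) = 1
  have hME : Nat.gcd M E = 1 := by
    have h : 2 * Nat.gcd E M = 2 := by
      rw [← Nat.gcd_mul_left, ← hE, ← hM]; exact hgcd
    rw [Nat.gcd_comm]; omega
  set Q := (q ^ r - 1) / N with hQdef
  have hQN : N * Q = q ^ r - 1 := Nat.mul_div_cancel' hNdvd
  -- M * Q = (q-1) * E
  have hMQ : M * Q = (q - 1) * E := by
    have h1 : 2 * (M * Q) = 2 * ((q - 1) * E) := by
      calc 2 * (M * Q) = N * Q := by rw [hM]; ring
        _ = (q - 1) * D := by rw [hQN, hQ]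
        _ = 2 * ((q - 1) * E) := by rw [hE]; ring
    omega
  have key : Nat.gcd (q - 1) Q * M = q - 1 := by
    calc Nat.gcd (q - 1) Q * M = Nat.gcd ((q - 1) * M) (Q * M) := by
          rw [Nat.gcd_mul_right]
      _ = Nat.gcd ((q - 1) * M) ((q - 1) * E) := by rw [mul_comm Q M, hMQ]
      _ = (q - 1) * Nat.gcd M E := by rw [Nat.gcd_mul_left]
      _ = q - 1 := by rw [hME, mul_one]
  have hrhs : 2 * (q - 1) / N = (q - 1) / M := by
    rw [hM, Nat.mul_div_mul_left _ _ (by norm_num)]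
  rw [hrhs]
  exact (Nat.div_eq_of_eq_mul_left hMpos key.symm).symm
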